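/- arXiv:2604.22459 — 3 statements merged into one kernel-verified Lean document; each statement's English description precedes it below -/
import Mathlib

section
/- The constant 1/2 together with the connectives ¬x = 1-x and truncated sum x ⊕ y = min(1,x+y) and product x·y generates all dyadic rationals in [0,1]: for every m, n with 0 ≤ m ≤ 2^n, the rational m/2^n is obtainable from 1/2 by finitely many applications of ¬, ⊕, and multiplication. -/
/-- The smallest set of reals containing 1/2 and closed under Łukasiewicz
negation, truncated sum, and product. -/
inductive GenHalf : ℝ → Prop
  | half : GenHalf (1/2)
  | neg {x : ℝ} : GenHalf x → GenHalf (1 - x)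
  | oplus {x y : ℝ} : GenHalf x → GenHalf y → GenHalf (min 1 (x + y))
  | mul {x y : ℝ} : GenHalf x → GenHalf y → GenHalf (x * y)

lemma gen_one : GenHalf 1 := by
  have h := GenHalf.oplus GenHalf.half GenHalf.half
  norm_num at h
  exact h

lemma gen_zero : GenHalf 0 := by
  have h := GenHalf.neg gen_one
  norm_num at h
  exact h

/-- Every dyadic rational m/2^n in [0,1] is generated from 1/2 by
¬, ⊕, and multiplication. -/
theorem stmt_5 (m n : ℕ) (h : m ≤ 2 ^ n) :
    GenHalf ((m : ℝ) / 2 ^ n) := by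
  induction n generalizing m with
  | zero =>
    interval_cases m
    · simpa using gen_zero
    · simpa using gen_one
  | succ n ih =>
    rcases le_or_gt m (2 ^ n) with hm | hm
    · have := (ih m hm).mul GenHalf.half
      convert this using 1
      push_cast
      ring
    · have h2 : 2 ^ (n + 1) - m ≤ 2 ^ n := by
        have : 2 ^ (n + 1) = 2 * 2 ^ n := by ring
        omega
      have := GenHalf.neg ((ih (2 ^ (n + 1) - m) h2).mul GenHalf.half)
      convert this using 1
      have hc : ((2 ^ (n + 1) - m : ℕ) : ℝ) = 2 ^ (n + 1) - m := by
        rw [Nat.cast_sub h]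
        push_cast
        ring
      rw [hc]
      have hpos : (0:ℝ) < 2 ^ (n + 1) := by positivity
      field_simp
      ring
end

section
/- There exists an infinitely branching Kripke model valued in [0,1] in which the formula △◊p → ◊△p fails: namely a world w with countably many successors w_i where p has value i/(i+1), so that △◊p has value 1 at w (since sup_i i/(i+1) = 1) but ◊△p has value 0 at w (since no successor gives p value 1); hence the Łukasiewicz implication △◊p → ◊△p has value 0 < 1 at w. -/
open scoped Classical

/-- Fuzzy diamond: supremum of values over accessible worlds, with sup ∅ = 0. -/
noncomputable def diaVal {W : Type*} (R : W → W → Prop) (f : W → ℝ) (w : W) : ℝ :=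
  if {w' | R w w'}.Nonempty then sSup (f '' {w' | R w w'}) else 0

/-- Crisp Delta operator: △x = 1 if x = 1, else 0. -/
noncomputable def deltaVal (x : ℝ) : ℝ := if x = 1 then 1 else 0

/-- Łukasiewicz implication. -/
noncomputable def lukImp (x y : ℝ) : ℝ := min 1 (1 - x + y)

private lemma frac_lt_one (i : ℕ) : (i : ℝ) / (i + 1) < 1 := by
  rw [div_lt_one (by positivity)]; linarith

private def myR : Option ℕ → Option ℕ → Prop := fun _ b => ∃ i : ℕ, b = some i

private noncomputable def myV : Option ℕ → ℝ := fun u => match u with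
  | none => 0
  | some i => (i : ℝ) / (i + 1)

private lemma hset : {w' | myR none w'} = Set.range (some : ℕ → Option ℕ) := by
  ext x; simp [myR, Set.range, eq_comm]

private lemma hne : {w' | myR none w'}.Nonempty := ⟨some 0, 0, rfl⟩

private lemma hdia1 : diaVal myR myV none = 1 := by
  have himg : myV '' {w' | myR none w'} = Set.range (fun i : ℕ => (i : ℝ) / (i + 1)) := by
    rw [hset, ← Set.range_comp]; rfl
  have hsup : sSup (Set.range (fun i : ℕ => (i : ℝ) / (i + 1))) = 1 := by
    apply csSup_eq_of_forall_le_of_forall_lt_exists_gt (Set.range_nonempty _)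
    · rintro x ⟨i, rfl⟩; exact (frac_lt_one i).le
    · intro y hy
      obtain ⟨n, hn⟩ := exists_nat_one_div_lt (show (0:ℝ) < 1 - y by linarith)
      refine ⟨(n : ℝ) / (n + 1), ⟨n, rfl⟩, ?_⟩
      have : (n : ℝ) / (n + 1) = 1 - 1 / (n + 1) := by field_simp; ring
      rw [this]; linarith
  rw [diaVal, if_pos hne, himg, hsup]

private lemma hdia2 : diaVal myR (fun u => deltaVal (myV u)) none = 0 := by
  have himg : (fun u => deltaVal (myV u)) '' {w' | myR none w'} = {0} := by
    ext x
    constructor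
    · rintro ⟨u, ⟨i, rfl⟩, rfl⟩
      simp [deltaVal, myV, (frac_lt_one i).ne]
    · rintro rfl
      exact ⟨some 0, ⟨0, rfl⟩, by simp [deltaVal, myV]⟩
  rw [diaVal, if_pos hne, himg, csSup_singleton]

/-- There is an (infinitely branching) [0,1]-valued Kripke model in which
△◊p → ◊△p fails: a world with countably many successors w_i where p has
value i/(i+1), so △◊p has value 1 but ◊△p has value 0, and the Łukasiewicz
implication gets value 0 < 1. -/
theorem stmt_8 :
    ∃ (W : Type) (R : W → W → Prop) (v : W → ℝ),
      (∀ u, v u ∈ Set.Icc (0:ℝ) 1) ∧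
      ∃ w : W,
        (∃ ws : ℕ → W, Function.Injective ws ∧ {w' | R w w'} = Set.range ws ∧
          ∀ i : ℕ, v (ws i) = (i : ℝ) / (i + 1)) ∧
        deltaVal (diaVal R v w) = 1 ∧
        diaVal R (fun u => deltaVal (v u)) w = 0 ∧
        lukImp (deltaVal (diaVal R v w)) (diaVal R (fun u => deltaVal (v u)) w)
          = 0 ∧ (0:ℝ) < 1 := by
  refine ⟨Option ℕ, myR, myV, ?_, none, ?_, ?_, hdia2, ?_, one_pos⟩
  · intro u
    cases u with
    | none => exact ⟨le_refl 0, zero_le_one⟩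
    | some i => exact ⟨by simp only [myV]; positivity, (frac_lt_one i).le⟩
  · exact ⟨some, fun a b h => Option.some_injective _ h, hset, fun i => rfl⟩
  · rw [hdia1]; simp [deltaVal]
  · rw [hdia1, hdia2]; simp [deltaVal, lukImp]
end

section
/- A formula φ of the outer probabilistic language is satisfiable in a 'standard' probabilistic model if and only if it is satisfiable in a sample-independent model. Concretely (one nontrivial direction): given a sample-independent model M = ⟨W, E, R, 𝔛, μ, V⟩ with inner event frame 𝔛 = ⟨W_𝔛, E_𝔛, R_𝔛⟩ and a world w ∈ W with I_M(φ, w) < 1, the model M' obtained by taking the disjoint union W ⊎ W_𝔛 of the outer and inner frames, extending each measure μ_{w,A} by zero outside W_𝔛, and keeping the valuation, is a standard probabilistic model satisfying I_{M'}(φ, w) = I_M(φ, w) for all w ∈ W and all formulas φ. -/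
open scoped Classical

/-- Event formulas (inner layer): classical multimodal formulas with
epistemic operators `know A` and action operators `box a`. -/
inductive EvForm (Ag Ac : Type) : Type
  | var : ℕ → EvForm Ag Ac
  | neg : EvForm Ag Ac → EvForm Ag Ac
  | and : EvForm Ag Ac → EvForm Ag Ac → EvForm Ag Ac
  | know : Ag → EvForm Ag Ac → EvForm Ag Ac
  | box : Ac → EvForm Ag Ac → EvForm Ag Ac

/-- Truth set of an event formula in an event model ⟨W, E, R, V⟩. -/
def evSem {Ag Ac W : Type} (E : Ag → W → W → Prop) (R : Ac → W → W → Prop)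
    (V : ℕ → Set W) : EvForm Ag Ac → Set W
  | .var n => V n
  | .neg α => (evSem E R V α)ᶜ
  | .and α β => evSem E R V α ∩ evSem E R V β
  | .know A α => {w | ∀ w', E A w w' → w' ∈ evSem E R V α}
  | .box a α => {w | ∀ w', R a w w' → w' ∈ evSem E R V α}

/-- Outer probabilistic formulas: probabilistic atoms Pr_A(α) over event
formulas, Łukasiewicz negation and implication, product conjunction, product
implication, the constant 1/2, and epistemic/action modalities. -/
inductive PrForm (Ag Ac : Type) : Type
  | pr : Ag → EvForm Ag Ac → PrForm Ag Ac
  | neg : PrForm Ag Ac → PrForm Ag Ac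
  | imp : PrForm Ag Ac → PrForm Ag Ac → PrForm Ag Ac
  | times : PrForm Ag Ac → PrForm Ag Ac → PrForm Ag Ac
  | pimp : PrForm Ag Ac → PrForm Ag Ac → PrForm Ag Ac
  | half : PrForm Ag Ac
  | know : Ag → PrForm Ag Ac → PrForm Ag Ac
  | box : Ac → PrForm Ag Ac → PrForm Ag Ac

/-- Interpretation of outer probabilistic formulas over an outer frame
⟨Wo, E, R⟩ and an inner event model ⟨Wi, Ei, Ri, Vi⟩, with measures
μ_{w,A} on subsets of Wi (a standard probabilistic model is the special case
Wi = Wo with the same frame; outer modalities are infima over accessible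
worlds, with inf ∅ = 1). -/
noncomputable def prSem {Ag Ac Wo Wi : Type}
    (E : Ag → Wo → Wo → Prop) (R : Ac → Wo → Wo → Prop)
    (Ei : Ag → Wi → Wi → Prop) (Ri : Ac → Wi → Wi → Prop) (Vi : ℕ → Set Wi)
    (μ : Wo → Ag → Set Wi → ℝ) : PrForm Ag Ac → Wo → ℝ
  | .pr A α, w => μ w A (evSem Ei Ri Vi α)
  | .neg φ, w => 1 - prSem E R Ei Ri Vi μ φ w
  | .imp φ χ, w =>
      min 1 (1 - prSem E R Ei Ri Vi μ φ w + prSem E R Ei Ri Vi μ χ w)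
  | .times φ χ, w => prSem E R Ei Ri Vi μ φ w * prSem E R Ei Ri Vi μ χ w
  | .pimp φ χ, w =>
      if prSem E R Ei Ri Vi μ φ w ≤ prSem E R Ei Ri Vi μ χ w then 1
      else prSem E R Ei Ri Vi μ χ w / prSem E R Ei Ri Vi μ φ w
  | .half, _ => 1/2
  | .know A φ, w =>
      if {w' | E A w w'}.Nonempty
      then sInf ((prSem E R Ei Ri Vi μ φ) '' {w' | E A w w'}) else 1
  | .box a φ, w =>
      if {w' | R a w w'}.Nonempty
      then sInf ((prSem E R Ei Ri Vi μ φ) '' {w' | R a w w'}) else 1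

/-- Disjoint union of two relations on a sum type. -/
def sumRel {α β : Type} (r : α → α → Prop) (s : β → β → Prop) :
    α ⊕ β → α ⊕ β → Prop
  | Sum.inl a, Sum.inl b => r a b
  | Sum.inr a, Sum.inr b => s a b
  | _, _ => False


lemma evSum {Ag Ac Wo Wi : Type}
    (E : Ag → Wo → Wo → Prop) (R : Ac → Wo → Wo → Prop)
    (Ei : Ag → Wi → Wi → Prop) (Ri : Ac → Wi → Wi → Prop) (Vi : ℕ → Set Wi) :
    ∀ (α : EvForm Ag Ac) (x : Wi),
      (Sum.inr x ∈ evSem (fun A => sumRel (E A) (Ei A))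
          (fun a => sumRel (R a) (Ri a)) (fun n => Sum.inr '' Vi n) α)
      ↔ x ∈ evSem Ei Ri Vi α := by
  intro α
  induction α with
  | var n => intro x; simp [evSem]
  | neg α ih => intro x; simp [evSem, ih]
  | and α β ih1 ih2 => intro x; simp [evSem, ih1, ih2]
  | know A α ih =>
    intro x
    constructor
    · intro h y hy; exact (ih y).mp (h (Sum.inr y) hy)
    · intro h w' hw'
      match w' with
      | Sum.inl y => exact absurd hw' (by simp [sumRel])
      | Sum.inr y => exact (ih y).mpr (h y hw')
  | box a α ih =>
    intro x
    constructor
    · intro h y hy; exact (ih y).mp (h (Sum.inr y) hy)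
    · intro h w' hw'
      match w' with
      | Sum.inl y => exact absurd hw' (by simp [sumRel])
      | Sum.inr y => exact (ih y).mpr (h y hw')

/-- Every sample-independent model can be turned into an equivalent standard
probabilistic model: take the disjoint union W ⊎ W_𝔛 of the outer and inner
frames, extend each measure μ_{w,A} by zero outside W_𝔛, and keep the
valuation (on the inner part). Then the interpretation of every outer formula
φ at every outer world w is unchanged; in particular any φ with
I_M(φ, w) < 1 in the SI model remains so in the standard model. -/
theorem stmt_11 {Ag Ac Wo Wi : Type}
    (E : Ag → Wo → Wo → Prop) (R : Ac → Wo → Wo → Prop)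
    (Ei : Ag → Wi → Wi → Prop) (Ri : Ac → Wi → Wi → Prop) (Vi : ℕ → Set Wi)
    (μ : Wo → Ag → Set Wi → ℝ)
    (hE : ∀ A, Equivalence (E A)) (hEi : ∀ A, Equivalence (Ei A))
    (hμ : ∀ w A, μ w A Set.univ = 1 ∧ (∀ S, 0 ≤ μ w A S ∧ μ w A S ≤ 1) ∧
      ∀ S T : Set Wi, Disjoint S T → μ w A (S ∪ T) = μ w A S + μ w A T)
    (μ' : Wo ⊕ Wi → Ag → Set (Wo ⊕ Wi) → ℝ)
    (hμ' : ∀ w A S, μ' (Sum.inl w) A S = μ w A (Sum.inr ⁻¹' S)) :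
    ∀ (φ : PrForm Ag Ac) (w : Wo),
      prSem (fun A => sumRel (E A) (Ei A)) (fun a => sumRel (R a) (Ri a))
        (fun A => sumRel (E A) (Ei A)) (fun a => sumRel (R a) (Ri a))
        (fun n => Sum.inr '' Vi n) μ' φ (Sum.inl w)
      = prSem E R Ei Ri Vi μ φ w := by
  intro φ
  induction φ with
  | pr A α =>
    intro w
    simp only [prSem, hμ']
    congr 1
    ext x
    exact evSum E R Ei Ri Vi α x
  | neg φ ih => intro w; simp [prSem, ih]
  | imp φ χ ih1 ih2 => intro w; simp [prSem, ih1, ih2]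
  | times φ χ ih1 ih2 => intro w; simp [prSem, ih1, ih2]
  | pimp φ χ ih1 ih2 => intro w; simp [prSem, ih1, ih2]
  | half => intro w; simp [prSem]
  | know A φ ih =>
    intro w
    have hset : {w' | sumRel (E A) (Ei A) (Sum.inl w) w'}
        = Sum.inl '' {w' | E A w w'} := by
      ext w'
      match w' with
      | Sum.inl y => simp [sumRel]
      | Sum.inr y => simp [sumRel]
    simp only [prSem, hset, Set.image_nonempty, Set.image_image]
    have hfun : (fun y => prSem (fun A => sumRel (E A) (Ei A))
        (fun a => sumRel (R a) (Ri a)) (fun A => sumRel (E A) (Ei A))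
        (fun a => sumRel (R a) (Ri a)) (fun n => Sum.inr '' Vi n) μ' φ (Sum.inl y))
        = fun y => prSem E R Ei Ri Vi μ φ y := funext ih
    rw [hfun]
  | box a φ ih =>
    intro w
    have hset : {w' | sumRel (R a) (Ri a) (Sum.inl w) w'}
        = Sum.inl '' {w' | R a w w'} := by
      ext w'
      match w' with
      | Sum.inl y => simp [sumRel]
      | Sum.inr y => simp [sumRel]
    simp only [prSem, hset, Set.image_nonempty, Set.image_image]
    have hfun : (fun y => prSem (fun A => sumRel (E A) (Ei A))
        (fun a => sumRel (R a) (Ri a)) (fun A => sumRel (E A) (Ei A))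
        (fun a => sumRel (R a) (Ri a)) (fun n => Sum.inr '' Vi n) μ' φ (Sum.inl y))
        = fun y => prSem E R Ei Ri Vi μ φ y := funext ih
    rw [hfun]
end
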